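/- Let r be a polymatroid on [n] of rank d. Let k ≥ 2 and let S₁, …, S_k ⊆ [n] be nonempty and pairwise disjoint. Let S ⊆ [n] be r̄-inseparable with S₁ ∪ ⋯ ∪ S_k ⊆ S and r̄(S₁ ∪ ⋯ ∪ S_k) = r̄(S). Then r̄(S₁ ∪ ⋯ ∪ S_k) < r̄(S₁) + ⋯ + r̄(S_k). -/

import Mathlib

/-- A polymatroid on `[n]`: a nonnegative-integer-valued function on subsets of `[n]`
that vanishes on the empty set, is monotone under inclusion, and is submodular. -/
def IsPolymatroid {n : ℕ} (r : Finset (Fin n) → ℕ) : Prop :=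
  r ∅ = 0 ∧ (∀ S T, S ⊆ T → r S ≤ r T) ∧
    ∀ S T, r (S ∪ T) + r (S ∩ T) ≤ r S + r T

/-- `S` is `r`-inseparable: for every pair of disjoint nonempty sets `S₁, S₂` with
`S = S₁ ∪ S₂` one has `r S < r S₁ + r S₂`. -/
def IsInseparable {n : ℕ} (r : Finset (Fin n) → ℕ) (S : Finset (Fin n)) : Prop :=
  ∀ S₁ S₂ : Finset (Fin n), S₁.Nonempty → S₂.Nonempty → Disjoint S₁ S₂ →
    S₁ ∪ S₂ = S → r S < r S₁ + r S₂

/-- `r̄ = r_0 + r_1 + ⋯ + r_d`, where `r_k S = min (d - k) (r S)` is the `k`-th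
truncation of a polymatroid `r` of rank `d`. -/
def polymatroidBar {n : ℕ} (r : Finset (Fin n) → ℕ) (d : ℕ) (S : Finset (Fin n)) : ℕ :=
  ∑ k ∈ Finset.range (d + 1), min (d - k) (r S)

section Helpers

variable {n : ℕ} (r : Finset (Fin n) → ℕ) (d : ℕ)

lemma bar_mono (hr : IsPolymatroid r) {A B : Finset (Fin n)} (h : A ⊆ B) :
    polymatroidBar r d A ≤ polymatroidBar r d B := by
  apply Finset.sum_le_sum
  intro j _
  exact min_le_min le_rfl (hr.2.1 _ _ h)

lemma bar_subadd (hr : IsPolymatroid r) (A B : Finset (Fin n)) :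
    polymatroidBar r d (A ∪ B) ≤ polymatroidBar r d A + polymatroidBar r d B := by
  rw [polymatroidBar, polymatroidBar, polymatroidBar, ← Finset.sum_add_distrib]
  apply Finset.sum_le_sum
  intro j _
  have h1 : r (A ∪ B) ≤ r A + r B :=
    le_trans (Nat.le_add_right _ _) (hr.2.2 A B)
  simp only [Nat.min_def]
  split_ifs <;> omega

lemma bar_biUnion_le (hr : IsPolymatroid r) {ι : Type*} [DecidableEq ι]
    (Si : ι → Finset (Fin n)) (T : Finset ι) :
    polymatroidBar r d (T.biUnion Si) ≤ ∑ i ∈ T, polymatroidBar r d (Si i) := by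
  induction T using Finset.induction_on with
  | empty => simp [polymatroidBar, hr.1]
  | insert a s hx ih =>
    rw [Finset.biUnion_insert, Finset.sum_insert hx]
    exact le_trans (bar_subadd r d hr _ _) (by omega)

lemma bar_strict (hr : IsPolymatroid r) (hd1 : 1 ≤ d) {A B : Finset (Fin n)}
    (ha : 1 ≤ r A) (hb : 1 ≤ r B) :
    polymatroidBar r d (A ∪ B) < polymatroidBar r d A + polymatroidBar r d B := by
  rw [polymatroidBar, polymatroidBar, polymatroidBar, ← Finset.sum_add_distrib]
  apply Finset.sum_lt_sum
  · intro j _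
    have h1 : r (A ∪ B) ≤ r A + r B :=
      le_trans (Nat.le_add_right _ _) (hr.2.2 A B)
    simp only [Nat.min_def]
    split_ifs <;> omega
  · refine ⟨d - 1, Finset.mem_range.2 (by omega), ?_⟩
    have hdd : d - (d - 1) = 1 := by omega
    rw [hdd]
    simp only [Nat.min_def]
    split_ifs <;> omega

lemma bar_zero {A : Finset (Fin n)} (h : r A = 0) : polymatroidBar r d A = 0 := by
  simp [polymatroidBar, h]

end Helpers

/-- Let `r` be a polymatroid of rank `d`, `k ≥ 2`, and `S₁, …, S_k` nonempty pairwise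
disjoint subsets of `[n]`. Let `S` be `r̄`-inseparable with `S₁ ∪ ⋯ ∪ S_k ⊆ S` and
`r̄(S₁ ∪ ⋯ ∪ S_k) = r̄(S)`. Then `r̄(S₁ ∪ ⋯ ∪ S_k) < r̄(S₁) + ⋯ + r̄(S_k)`. -/
theorem bar_union_lt_sum {n : ℕ} (r : Finset (Fin n) → ℕ)
    (hr : IsPolymatroid r) (d : ℕ) (hd : r Finset.univ = d)
    (k : ℕ) (hk : 2 ≤ k) (Si : Fin k → Finset (Fin n))
    (hne : ∀ i, (Si i).Nonempty)
    (hdisj : ∀ i j, i ≠ j → Disjoint (Si i) (Si j))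
    (S : Finset (Fin n))
    (hins : IsInseparable (polymatroidBar r d) S)
    (hsub : Finset.univ.biUnion Si ⊆ S)
    (heq : polymatroidBar r d (Finset.univ.biUnion Si) = polymatroidBar r d S) :
    polymatroidBar r d (Finset.univ.biUnion Si) < ∑ i, polymatroidBar r d (Si i) := by
  obtain ⟨i0, i1, hne01⟩ : ∃ i0 i1 : Fin k, i0 ≠ i1 :=
    ⟨⟨0, by omega⟩, ⟨1, by omega⟩, by simp [Fin.ext_iff]⟩
  -- the contradiction machine: if some part has bar value 0, inseparability fails
  have contra : ∀ j l : Fin k, j ≠ l → polymatroidBar r d (Si j) = 0 → False := by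
    intro j l hjl hzero
    have hSjS : Si j ⊆ S :=
      (Finset.subset_biUnion_of_mem Si (Finset.mem_univ j)).trans hsub
    have hSlS : Si l ⊆ S \ Si j := by
      intro x hx
      rw [Finset.mem_sdiff]
      refine ⟨hsub (Finset.mem_biUnion.2 ⟨l, Finset.mem_univ l, hx⟩), ?_⟩
      exact fun hxj => (hdisj l j (Ne.symm hjl)).forall_ne_finset hx hxj rfl
    have hSne : (S \ Si j).Nonempty := (hne l).mono hSlS
    have h2 := hins (Si j) (S \ Si j) (hne j) hSne Finset.disjoint_sdiff
      (Finset.union_sdiff_of_subset hSjS)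
    have h3 : polymatroidBar r d (S \ Si j) ≤ polymatroidBar r d S :=
      bar_mono r d hr (Finset.sdiff_subset)
    omega
  by_cases hd0 : d = 0
  · exact absurd (by simp [polymatroidBar, hd0]) fun h => contra i0 i1 hne01 h
  have hd1 : 1 ≤ d := by omega
  by_cases h0 : r (Si i0) = 0
  · exact absurd (bar_zero r d h0) fun h => contra i0 i1 hne01 h
  by_cases h1 : r (Si i1) = 0
  · exact absurd (bar_zero r d h1) fun h => contra i1 i0 (Ne.symm hne01) h
  -- main case
  have huniv : (Finset.univ : Finset (Fin k)) = insert i0 (Finset.univ.erase i0) :=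
    (Finset.insert_erase (Finset.mem_univ i0)).symm
  have hU : Finset.univ.biUnion Si = Si i0 ∪ (Finset.univ.erase i0).biUnion Si := by
    conv_lhs => rw [huniv]
    rw [Finset.biUnion_insert]
  have hi1mem : i1 ∈ Finset.univ.erase i0 :=
    Finset.mem_erase.2 ⟨Ne.symm hne01, Finset.mem_univ i1⟩
  have hV : 1 ≤ r ((Finset.univ.erase i0).biUnion Si) :=
    le_trans (by omega) (hr.2.1 _ _ (Finset.subset_biUnion_of_mem Si hi1mem))
  have hstep : polymatroidBar r d (Finset.univ.biUnion Si) <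
      polymatroidBar r d (Si i0) +
        polymatroidBar r d ((Finset.univ.erase i0).biUnion Si) := by
    rw [hU]
    exact bar_strict r d hr hd1 (by omega) hV
  have hrest := bar_biUnion_le r d hr Si (Finset.univ.erase i0)
  have hsum : polymatroidBar r d (Si i0) +
      ∑ i ∈ Finset.univ.erase i0, polymatroidBar r d (Si i) =
      ∑ i, polymatroidBar r d (Si i) :=
    Finset.add_sum_erase _ (fun i => polymatroidBar r d (Si i)) (Finset.mem_univ i0)
  omega
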